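/- Let f, g : ℝ → ℝ be such that f − 1 and g − 1 are differentiable and square-integrable with square-integrable derivatives, and suppose inf_{y ∈ ℝ} ‖f − g(· + y)‖_{H¹} < ‖g − 1‖_{H¹}. Then the infimum is attained: there exists y₀ ∈ ℝ such that ‖f − g(· + y₀)‖_{H¹} = inf_{y ∈ ℝ} ‖f − g(· + y)‖_{H¹}. -/

import Mathlib

open MeasureTheory

/-- The squared `H¹(ℝ)` norm, `‖u‖_{H¹}² = ∫ u² + ∫ (u')²`. -/
noncomputable def H1normSq (u : ℝ → ℝ) : ℝ :=
  (∫ x : ℝ, (u x) ^ 2) + ∫ x : ℝ, (deriv u x) ^ 2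

/-- The `H¹(ℝ)` norm. -/
noncomputable def H1norm (u : ℝ → ℝ) : ℝ := Real.sqrt (H1normSq u)

open Filter Set
open scoped ENNReal InnerProductSpace Topology

/-- Translation by `y` as an additive map on `L²(ℝ)`. -/
noncomputable abbrev stmt8Tr (y : ℝ) :
    Lp ℝ 2 (volume : Measure ℝ) →+ Lp ℝ 2 (volume : Measure ℝ) :=
  Lp.compMeasurePreserving (· + y) (measurePreserving_add_right volume y)

lemma stmt8_normSq_eq_integral (u : Lp ℝ 2 (volume : Measure ℝ)) :
    ‖u‖ ^ 2 = ∫ x : ℝ, (u x) ^ 2 := by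
  rw [← real_inner_self_eq_norm_sq, L2.inner_def]
  congr 1; ext x; simp [RCLike.inner_apply, sq]

lemma stmt8_inner_toLp (F G : ℝ → ℝ) (hF : MemLp F 2 (volume : Measure ℝ))
    (hG : MemLp G 2 volume) :
    ⟪hF.toLp F, hG.toLp G⟫_ℝ = ∫ x : ℝ, F x * G x := by
  rw [L2.inner_def]
  refine integral_congr_ae ?_
  filter_upwards [hF.coeFn_toLp, hG.coeFn_toLp] with x hx hy
  simp [RCLike.inner_apply, hx, hy, mul_comm]

lemma stmt8_norm_toLp_sub_le {F F₀ : ℝ → ℝ} (hF : MemLp F 2 (volume : Measure ℝ))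
    (hF₀ : MemLp F₀ 2 volume) {η : ℝ} (hη : 0 ≤ η)
    (h : eLpNorm (F - F₀) 2 volume ≤ ENNReal.ofReal η) :
    ‖hF.toLp F - hF₀.toLp F₀‖ ≤ η := by
  rw [← MemLp.toLp_sub hF hF₀, Lp.norm_toLp]
  exact ENNReal.toReal_le_of_le_ofReal hη h

lemma stmt8_Tr_continuous (u : Lp ℝ 2 (volume : Measure ℝ)) :
    Continuous fun y : ℝ => stmt8Tr y u := by
  have : Continuous fun y : ℝ => (⟨fun x => x + y, by continuity⟩ : C(ℝ, ℝ)) := by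
    apply ContinuousMap.continuous_of_continuous_uncurry
    exact continuous_snd.add continuous_fst
  exact Continuous.compMeasurePreservingLp continuous_const this
    (fun y => measurePreserving_add_right volume y) (by norm_num)

lemma stmt8_corr_vanish {F G : ℝ → ℝ} (hF : MemLp F 2 (volume : Measure ℝ))
    (hG : MemLp G 2 volume) :
    Tendsto (fun y : ℝ => ⟪hF.toLp F, stmt8Tr y (hG.toLp G)⟫_ℝ) (cocompact ℝ) (𝓝 0) := by
  rw [Metric.tendsto_nhds]
  intro ε hε
  set eF := hF.toLp F with heF
  set eG := hG.toLp G with heG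
  have hη₁ : (0:ℝ) < ε / (3 * (‖eG‖ + 1)) := by positivity
  obtain ⟨F₀, hF₀c, hF₀close, hF₀cont, hF₀m⟩ :=
    hF.exists_hasCompactSupport_eLpNorm_sub_le (by norm_num)
      (ε := ENNReal.ofReal (ε / (3 * (‖eG‖ + 1)))) (by simp [ENNReal.ofReal_eq_zero, not_le, hη₁])
  set eF₀ := hF₀m.toLp F₀ with heF₀
  have hd₁ : ‖eF - eF₀‖ ≤ ε / (3 * (‖eG‖ + 1)) := stmt8_norm_toLp_sub_le hF hF₀m hη₁.le hF₀close
  have hη₂ : (0:ℝ) < ε / (3 * (‖eF₀‖ + 1)) := by positivity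
  obtain ⟨G₀, hG₀c, hG₀close, hG₀cont, hG₀m⟩ :=
    hG.exists_hasCompactSupport_eLpNorm_sub_le (by norm_num)
      (ε := ENNReal.ofReal (ε / (3 * (‖eF₀‖ + 1)))) (by simp [ENNReal.ofReal_eq_zero, not_le, hη₂])
  set eG₀ := hG₀m.toLp G₀ with heG₀
  have hd₂ : ‖eG - eG₀‖ ≤ ε / (3 * (‖eF₀‖ + 1)) := stmt8_norm_toLp_sub_le hG hG₀m hη₂.le hG₀close
  obtain ⟨R₁, hR₁⟩ := hF₀c.isCompact.isBounded.subset_closedBall 0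
  obtain ⟨R₂, hR₂⟩ := hG₀c.isCompact.isBounded.subset_closedBall 0
  have hev : ∀ᶠ y : ℝ in cocompact ℝ, y ∉ Metric.closedBall (0:ℝ) (R₁ + R₂) :=
    (isCompact_closedBall (0:ℝ) (R₁ + R₂)).compl_mem_cocompact
  filter_upwards [hev] with y hy
  have hzero : ⟪eF₀, stmt8Tr y eG₀⟫_ℝ = 0 := by
    rw [heF₀, heG₀, Lp.toLp_compMeasurePreserving hG₀m _, stmt8_inner_toLp]
    have hpt : ∀ x : ℝ, F₀ x * (G₀ ∘ (· + y)) x = 0 := by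
      intro x
      by_cases hx : F₀ x = 0
      · simp [hx]
      · have hx1 := hR₁ (subset_tsupport F₀ hx)
        have hG0 : G₀ (x + y) = 0 := by
          apply image_eq_zero_of_notMem_tsupport
          intro hmem
          have hx2 := hR₂ hmem
          simp only [Metric.mem_closedBall, Real.dist_eq, sub_zero, not_le] at hx1 hx2 hy
          have habs : |y| ≤ |x + y| + |x| := by
            have := abs_sub (x + y) x
            simpa using this
          linarith
        simp [Function.comp, hG0]
    simp only [hpt, integral_zero]
  have hsplit : ⟪eF, stmt8Tr y eG⟫_ℝ =
      ⟪eF - eF₀, stmt8Tr y eG⟫_ℝ + ⟪eF₀, stmt8Tr y (eG - eG₀)⟫_ℝ + ⟪eF₀, stmt8Tr y eG₀⟫_ℝ := by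
    rw [map_sub, inner_sub_left, inner_sub_right]; ring
  rw [dist_zero_right, hsplit, hzero, add_zero]
  have hb₁ : |⟪eF - eF₀, stmt8Tr y eG⟫_ℝ| ≤ (ε / (3 * (‖eG‖ + 1))) * ‖eG‖ := by
    refine le_trans (abs_real_inner_le_norm _ _) ?_
    rw [Lp.norm_compMeasurePreserving]
    exact mul_le_mul_of_nonneg_right hd₁ (norm_nonneg _)
  have hb₂ : |⟪eF₀, stmt8Tr y (eG - eG₀)⟫_ℝ| ≤ ‖eF₀‖ * (ε / (3 * (‖eF₀‖ + 1))) := by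
    refine le_trans (abs_real_inner_le_norm _ _) ?_
    rw [Lp.norm_compMeasurePreserving]
    exact mul_le_mul_of_nonneg_left hd₂ (norm_nonneg _)
  have h1 : (ε / (3 * (‖eG‖ + 1))) * ‖eG‖ ≤ ε / 3 := by
    rw [div_mul_eq_mul_div, div_le_div_iff₀ (by positivity) (by norm_num)]
    nlinarith [norm_nonneg eG]
  have h2 : ‖eF₀‖ * (ε / (3 * (‖eF₀‖ + 1))) ≤ ε / 3 := by
    rw [mul_div_assoc', div_le_div_iff₀ (by positivity) (by norm_num)]
    nlinarith [norm_nonneg eF₀]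
  calc ‖⟪eF - eF₀, stmt8Tr y eG⟫_ℝ + ⟪eF₀, stmt8Tr y (eG - eG₀)⟫_ℝ‖
      ≤ |⟪eF - eF₀, stmt8Tr y eG⟫_ℝ| + |⟪eF₀, stmt8Tr y (eG - eG₀)⟫_ℝ| := abs_add_le _ _
    _ ≤ ε / 3 + ε / 3 := add_le_add (hb₁.trans h1) (hb₂.trans h2)
    _ < ε := by linarith

lemma stmt8_integral_sq_sub (F G : ℝ → ℝ) (hF : MemLp F 2 (volume : Measure ℝ))
    (hG : MemLp G 2 volume) (y : ℝ) :
    ∫ x : ℝ, (F x - G (x + y)) ^ 2 = ‖hF.toLp F - stmt8Tr y (hG.toLp G)‖ ^ 2 := by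
  rw [stmt8_normSq_eq_integral, Lp.toLp_compMeasurePreserving hG _]
  refine (integral_congr_ae ?_).symm
  filter_upwards [Lp.coeFn_sub (hF.toLp F)
      ((hG.comp_measurePreserving (measurePreserving_add_right volume y)).toLp _),
    hF.coeFn_toLp,
    (hG.comp_measurePreserving (measurePreserving_add_right volume y)).coeFn_toLp]
    with x h1 h2 h3
  simp only [h1, Pi.sub_apply, h2, h3, Function.comp_apply]

theorem stmt_8 (f g : ℝ → ℝ)
    (hf : Differentiable ℝ (fun x => f x - 1))
    (hf1 : Integrable (fun x => (f x - 1) ^ 2))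
    (hf2 : Integrable (fun x => (deriv (fun y => f y - 1) x) ^ 2))
    (hg : Differentiable ℝ (fun x => g x - 1))
    (hg1 : Integrable (fun x => (g x - 1) ^ 2))
    (hg2 : Integrable (fun x => (deriv (fun y => g y - 1) x) ^ 2))
    (hlt : (⨅ y : ℝ, H1norm (fun x => f x - g (x + y))) < H1norm (fun x => g x - 1)) :
    ∃ y₀ : ℝ, H1norm (fun x => f x - g (x + y₀)) =
      ⨅ y : ℝ, H1norm (fun x => f x - g (x + y)) := by
  -- membership in L²
  have hFm : MemLp (fun x => f x - 1) 2 (volume : Measure ℝ) :=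
    (memLp_two_iff_integrable_sq hf.continuous.aestronglyMeasurable).2 hf1
  have hGm : MemLp (fun x => g x - 1) 2 (volume : Measure ℝ) :=
    (memLp_two_iff_integrable_sq hg.continuous.aestronglyMeasurable).2 hg1
  have hF'm : MemLp (deriv (fun x => f x - 1)) 2 (volume : Measure ℝ) :=
    (memLp_two_iff_integrable_sq
      (measurable_deriv (fun x => f x - 1)).aestronglyMeasurable).2 hf2
  have hG'm : MemLp (deriv (fun x => g x - 1)) 2 (volume : Measure ℝ) :=
    (memLp_two_iff_integrable_sq
      (measurable_deriv (fun x => g x - 1)).aestronglyMeasurable).2 hg2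
  set eF := hFm.toLp _ with heF
  set eG := hGm.toLp _ with heG
  set eF' := hF'm.toLp _ with heF'
  set eG' := hG'm.toLp _ with heG'
  set h : ℝ → ℝ := fun y =>
    Real.sqrt (‖eF - stmt8Tr y eG‖ ^ 2 + ‖eF' - stmt8Tr y eG'‖ ^ 2) with hh
  -- derivative identity
  have hfd : Differentiable ℝ f := by simpa using hf.add_const 1
  have hgd : Differentiable ℝ g := by simpa using hg.add_const 1
  have hderiv : ∀ y x : ℝ, deriv (fun x => f x - g (x + y)) x
      = deriv (fun x => f x - 1) x - deriv (fun x => g x - 1) (x + y) := by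
    intro y x
    have hgy : DifferentiableAt ℝ (fun x : ℝ => g (x + y)) x :=
      (hgd (x + y)).comp x ((differentiable_id.add_const y) x)
    rw [deriv_fun_sub (hfd x) hgy, deriv_comp_add_const, deriv_sub_const, deriv_sub_const]
  -- the key identification
  have hkey : ∀ y : ℝ, H1norm (fun x => f x - g (x + y)) = h y := by
    intro y
    have e1 : (fun x : ℝ => (f x - g (x + y)) ^ 2)
        = fun x => ((f x - 1) - (g (x + y) - 1)) ^ 2 := by funext x; ring
    have e2 : (fun x : ℝ => (deriv (fun x => f x - g (x + y)) x) ^ 2)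
        = fun x => (deriv (fun x => f x - 1) x - deriv (fun x => g x - 1) (x + y)) ^ 2 := by
      funext x; rw [hderiv y x]
    rw [H1norm, H1normSq, hh]
    congr 1
    rw [e1, e2, stmt8_integral_sq_sub _ _ hFm hGm y, stmt8_integral_sq_sub _ _ hF'm hG'm y]
  -- continuity
  have hhcont : Continuous h := by
    apply Real.continuous_sqrt.comp
    exact (((continuous_const.sub (stmt8_Tr_continuous eG)).norm.pow 2).add
      ((continuous_const.sub (stmt8_Tr_continuous eG')).norm.pow 2))
  -- the limit at infinity
  have hexp : ∀ y : ℝ, h y = Real.sqrt ((‖eF‖ ^ 2 - 2 * ⟪eF, stmt8Tr y eG⟫_ℝ + ‖eG‖ ^ 2)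
      + (‖eF'‖ ^ 2 - 2 * ⟪eF', stmt8Tr y eG'⟫_ℝ + ‖eG'‖ ^ 2)) := by
    intro y
    rw [hh]
    simp only [norm_sub_sq_real, Lp.norm_compMeasurePreserving]
  have hlim : Tendsto h (cocompact ℝ)
      (𝓝 (Real.sqrt ((‖eF‖ ^ 2 - 2 * 0 + ‖eG‖ ^ 2) + (‖eF'‖ ^ 2 - 2 * 0 + ‖eG'‖ ^ 2)))) := by
    rw [show h = fun y => Real.sqrt ((‖eF‖ ^ 2 - 2 * ⟪eF, stmt8Tr y eG⟫_ℝ + ‖eG‖ ^ 2)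
      + (‖eF'‖ ^ 2 - 2 * ⟪eF', stmt8Tr y eG'⟫_ℝ + ‖eG'‖ ^ 2)) from funext hexp]
    apply (Real.continuous_sqrt.tendsto _).comp
    exact (((tendsto_const_nhds.sub ((stmt8_corr_vanish hFm hGm).const_mul 2)).add
        tendsto_const_nhds).add
      ((tendsto_const_nhds.sub ((stmt8_corr_vanish hF'm hG'm).const_mul 2)).add
        tendsto_const_nhds))
  -- identify H1norm (g - 1)
  have hBint : H1norm (fun x => g x - 1) = Real.sqrt (‖eG‖ ^ 2 + ‖eG'‖ ^ 2) := by
    have e1 : (∫ x : ℝ, (g x - 1) ^ 2) = ‖eG‖ ^ 2 := by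
      rw [stmt8_normSq_eq_integral, heG]
      refine integral_congr_ae ?_
      filter_upwards [hGm.coeFn_toLp] with x hx
      rw [hx]
    have e2 : (∫ x : ℝ, (deriv (fun x => g x - 1) x) ^ 2) = ‖eG'‖ ^ 2 := by
      rw [stmt8_normSq_eq_integral, heG']
      refine integral_congr_ae ?_
      filter_upwards [hG'm.coeFn_toLp] with x hx
      rw [hx]
    rw [H1norm, H1normSq, e1, e2]
  -- find a competitor below the boundary value
  obtain ⟨y₁, hy₁⟩ := exists_lt_of_ciInf_lt hlt
  have hy₁' : h y₁ < Real.sqrt ((‖eF‖ ^ 2 - 2 * 0 + ‖eG‖ ^ 2)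
      + (‖eF'‖ ^ 2 - 2 * 0 + ‖eG'‖ ^ 2)) := by
    have hle : Real.sqrt (‖eG‖ ^ 2 + ‖eG'‖ ^ 2) ≤ Real.sqrt ((‖eF‖ ^ 2 - 2 * 0 + ‖eG‖ ^ 2)
        + (‖eF'‖ ^ 2 - 2 * 0 + ‖eG'‖ ^ 2)) := by
      apply Real.sqrt_le_sqrt
      nlinarith [sq_nonneg ‖eF‖, sq_nonneg ‖eF'‖]
    calc h y₁ = H1norm (fun x => f x - g (x + y₁)) := (hkey y₁).symm
      _ < H1norm (fun x => g x - 1) := hy₁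
      _ = Real.sqrt (‖eG‖ ^ 2 + ‖eG'‖ ^ 2) := hBint
      _ ≤ _ := hle
  have hev : ∀ᶠ y in cocompact ℝ, h y₁ ≤ h y := hlim.eventually (eventually_ge_nhds hy₁')
  obtain ⟨y₀, hy₀⟩ := hhcont.exists_forall_le' y₁ hev
  refine ⟨y₀, ?_⟩
  rw [hkey y₀]
  have hbdd : BddBelow (Set.range fun y : ℝ => H1norm (fun x => f x - g (x + y))) := by
    refine ⟨0, ?_⟩
    rintro a ⟨y, rfl⟩
    exact Real.sqrt_nonneg _
  refine le_antisymm ?_ ?_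
  · refine le_ciInf fun y => ?_
    rw [hkey y]
    exact hy₀ y
  · have := ciInf_le hbdd y₀
    rwa [hkey y₀] at this
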